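/- For every integer n ≥ 1, with l := x_0^{-2} x_1 x_0^{n+1} x_1^{-n} and r := x_0^2 l in Thompson's group F, the only element of {x_0 r, x_0^{-1} r, x_1 r, x_1^{-1} r} whose word length with respect to {x_0, x_1} is at most 2n + 2 is x_1^{-1} r; that is, x_1^{-1} r is the unique neighbor of r in the Cayley graph of F lying in the ball B_{2n+2}. -/

import Mathlib

namespace ThompsonF

/-- forward map: identity below `i`, slope 2 on `[i,i+1]`, shift by 1 above. -/
def fFun (i : ℚ) : ℚ → ℚ := fun t => if t ≤ i then t else if t ≤ i + 1 then 2*t - i else t + 1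

/-- inverse map. -/
def fInvFun (i : ℚ) : ℚ → ℚ := fun t => if t ≤ i then t else if t ≤ i + 2 then (t + i)/2 else t - 1

lemma fFun_lo {i t : ℚ} (h : t ≤ i) : fFun i t = t := by unfold fFun; split_ifs <;> linarith
lemma fFun_mid {i t : ℚ} (h1 : i ≤ t) (h2 : t ≤ i + 1) : fFun i t = 2*t - i := by
  unfold fFun; split_ifs <;> linarith
lemma fFun_hi {i t : ℚ} (h : i + 1 ≤ t) : fFun i t = t + 1 := by
  unfold fFun; split_ifs <;> linarith
lemma fInvFun_lo {i t : ℚ} (h : t ≤ i) : fInvFun i t = t := by unfold fInvFun; split_ifs <;> linarith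
lemma fInvFun_mid {i t : ℚ} (h1 : i ≤ t) (h2 : t ≤ i + 2) : fInvFun i t = (t + i)/2 := by
  unfold fInvFun; split_ifs <;> linarith
lemma fInvFun_hi {i t : ℚ} (h : i + 2 ≤ t) : fInvFun i t = t - 1 := by
  unfold fInvFun; split_ifs <;> linarith

lemma fFun_strictMono (i : ℚ) : StrictMono (fFun i) := by
  intro a b hab
  unfold fFun
  split_ifs <;> linarith

lemma fInvFun_strictMono (i : ℚ) : StrictMono (fInvFun i) := by
  intro a b hab
  unfold fInvFun
  split_ifs <;> linarith

lemma fInvFun_fFun (i : ℚ) : ∀ t, fInvFun i (fFun i t) = t := by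
  intro t
  rcases le_or_gt t i with h | h
  · rw [fFun_lo h, fInvFun_lo h]
  rcases le_or_gt t (i+1) with h2 | h2
  · rw [fFun_mid (le_of_lt h) h2, fInvFun_mid (by linarith) (by linarith)]; ring
  · rw [fFun_hi (by linarith), fInvFun_hi (by linarith)]; ring

lemma fFun_fInvFun (i : ℚ) : ∀ t, fFun i (fInvFun i t) = t := by
  intro t
  rcases le_or_gt t i with h | h
  · rw [fInvFun_lo h, fFun_lo h]
  rcases le_or_gt t (i+2) with h2 | h2
  · rw [fInvFun_mid (le_of_lt h) h2, fFun_mid (by linarith) (by linarith)]; ring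
  · rw [fInvFun_hi (by linarith), fFun_hi (by linarith)]; ring

/-- The permutation of `ℚ` given by `fFun i`. -/
def fperm (i : ℕ) : Equiv.Perm ℚ :=
  ⟨fFun (i : ℚ), fInvFun (i : ℚ), fInvFun_fFun _, fFun_fInvFun _⟩

@[simp] lemma fperm_apply (i : ℕ) (t : ℚ) : fperm i t = fFun (i : ℚ) t := rfl
@[simp] lemma fperm_inv_apply (i : ℕ) (t : ℚ) : (fperm i)⁻¹ t = fInvFun (i : ℚ) t := rfl

lemma fperm_conj {i j : ℕ} (hij : i < j) :
    fperm i * fperm j * (fperm i)⁻¹ = fperm (j+1) := by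
  have hij' : (i : ℚ) + 1 ≤ (j : ℚ) := by exact_mod_cast Nat.succ_le_of_lt hij
  apply Equiv.ext
  intro t
  have key : fFun (i:ℚ) (fFun (j:ℚ) (fInvFun (i:ℚ) t)) = fFun ((j:ℚ)+1) t := by
    rcases le_or_gt t ((j:ℚ)+1) with h1 | h1
    · -- fInv i t ≤ j, so f j acts as identity there, and f i undoes fInv i
      have e1 : fFun (j:ℚ) (fInvFun (i:ℚ) t) = fInvFun (i:ℚ) t := by
        apply fFun_lo
        rcases le_or_gt t (i:ℚ) with h2 | h2
        · rw [fInvFun_lo h2]; linarith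
        rcases le_or_gt t ((i:ℚ)+2) with h3 | h3
        · rw [fInvFun_mid (le_of_lt h2) h3]; linarith
        · rw [fInvFun_hi (by linarith)]; linarith
      rw [e1, fFun_fInvFun, fFun_lo h1]
    rcases le_or_gt t ((j:ℚ)+2) with h2 | h2
    · have e0 : fInvFun (i:ℚ) t = t - 1 := fInvFun_hi (by linarith)
      have e1 : fFun (j:ℚ) (t-1) = 2*(t-1) - j := fFun_mid (by linarith) (by linarith)
      have e2 : fFun (i:ℚ) (2*(t-1) - j) = (2*(t-1) - j) + 1 := fFun_hi (by linarith)
      have e3 : fFun ((j:ℚ)+1) t = 2*t - (j+1) := fFun_mid (by linarith) (by linarith)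
      rw [e0, e1, e2, e3]; ring
    · have e0 : fInvFun (i:ℚ) t = t - 1 := fInvFun_hi (by linarith)
      have e1 : fFun (j:ℚ) (t-1) = (t-1) + 1 := fFun_hi (by linarith)
      have e2 : fFun (i:ℚ) ((t-1)+1) = ((t-1)+1) + 1 := fFun_hi (by linarith)
      have e3 : fFun ((j:ℚ)+1) t = t + 1 := fFun_hi (by linarith)
      rw [e0, e1, e2, e3]; ring

  calc (fperm i * fperm j * (fperm i)⁻¹) t
      = fFun (i:ℚ) (fFun (j:ℚ) (fInvFun (i:ℚ) t)) := rfl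
    _ = fFun ((j:ℚ)+1) t := key
    _ = fperm (j+1) t := by rw [fperm_apply]; push_cast; ring_nf

/-- The defining relators of Thompson's group `F`:
for `i < j`, the relator `x_i⁻¹ * x_j * x_i * x_{j+1}⁻¹`. -/
def rels : Set (FreeGroup ℕ) :=
  {r | ∃ i j : ℕ, i < j ∧
    r = (FreeGroup.of i)⁻¹ * FreeGroup.of j * FreeGroup.of i * (FreeGroup.of (j + 1))⁻¹}

/-- Thompson's group `F`, presented by `⟨x₀, x₁, … ∣ x_i⁻¹ x_j x_i = x_{j+1} for i < j⟩`. -/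
abbrev F : Type := PresentedGroup rels

/-- The generator `x_i` of Thompson's group `F`. -/
def x (i : ℕ) : F := PresentedGroup.of i

lemma rels_check : ∀ r ∈ rels, FreeGroup.lift (fun i => (fperm i)⁻¹) r = 1 := by
  rintro r ⟨i, j, hij, rfl⟩
  have h := fperm_conj hij
  have h2 : fperm i * (fperm j)⁻¹ * (fperm i)⁻¹ = (fperm (j+1))⁻¹ := by
    rw [← h]; group
  simp only [map_mul, map_inv, FreeGroup.lift_apply_of]
  rw [inv_inv, h2]
  group

noncomputable def Phi : F →* Equiv.Perm ℚ := PresentedGroup.toGroup rels_check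

lemma Phi_x (i : ℕ) : Phi (x i) = (fperm i)⁻¹ := PresentedGroup.toGroup.of rels_check

lemma A_check : ∀ r ∈ rels,
    FreeGroup.lift (fun i => Multiplicative.ofAdd (if i = 0 then (1:ℤ) else 0)) r = 1 := by
  rintro r ⟨i, j, hij, rfl⟩
  simp only [map_mul, map_inv, FreeGroup.lift_apply_of]
  have hj : j ≠ 0 := by omega
  have hj1 : j + 1 ≠ 0 := by omega
  rw [if_neg hj, if_neg hj1]
  simp only [ofAdd_zero]
  group

lemma B_check : ∀ r ∈ rels,
    FreeGroup.lift (fun _ => Multiplicative.ofAdd (1:ℤ)) r = 1 := by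
  rintro r ⟨i, j, hij, rfl⟩
  simp only [map_mul, map_inv, FreeGroup.lift_apply_of]
  apply Multiplicative.toAdd.injective
  simp

noncomputable def Ahom : F →* Multiplicative ℤ := PresentedGroup.toGroup A_check
noncomputable def Bhom : F →* Multiplicative ℤ := PresentedGroup.toGroup B_check

noncomputable def zA : F → ℤ := fun g => Multiplicative.toAdd (Ahom g)
noncomputable def zB : F → ℤ := fun g => Multiplicative.toAdd (Bhom g)

lemma zA_mul (g h : F) : zA (g * h) = zA g + zA h := by simp [zA, map_mul]
lemma zB_mul (g h : F) : zB (g * h) = zB g + zB h := by simp [zB, map_mul]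
lemma zA_inv (g : F) : zA g⁻¹ = - zA g := by simp [zA, map_inv]
lemma zB_inv (g : F) : zB g⁻¹ = - zB g := by simp [zB, map_inv]
lemma zA_pow (g : F) (k : ℕ) : zA (g ^ k) = k * zA g := by simp [zA, map_pow]
lemma zB_pow (g : F) (k : ℕ) : zB (g ^ k) = k * zB g := by simp [zB, map_pow]
lemma zA_x0 : zA (x 0) = 1 := by
  simp [zA, x, Ahom, PresentedGroup.toGroup.of]
lemma zA_x1 : zA (x 1) = 0 := by
  simp [zA, x, Ahom, PresentedGroup.toGroup.of]
lemma zB_x (i : ℕ) : zB (x i) = 1 := by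
  simp [zB, x, Bhom, PresentedGroup.toGroup.of]
/-- The potential function: `ψ c = 2^c` for `c ≤ 1`, `c + 1` for `c ≥ 1`. -/
noncomputable def psi (c : ℤ) : ℚ := if c ≤ 1 then (2:ℚ)^c else ((c : ℚ) + 1)

lemma two_zpow_pos (c : ℤ) : (0:ℚ) < 2^c := zpow_pos (by norm_num) c

lemma two_zpow_le {m n : ℤ} (h : m ≤ n) : (2:ℚ)^m ≤ 2^n := by
  have h2 : (1:ℚ) ≤ 2 := by norm_num
  exact zpow_le_zpow_right₀ h2 h

lemma psi_pos (c : ℤ) : 0 < psi c := by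
  unfold psi
  split_ifs with h
  · exact two_zpow_pos c
  · push_neg at h
    have : (1:ℚ) < (c:ℚ) := by exact_mod_cast h
    linarith

lemma psi_of_le {c : ℤ} (h : c ≤ 1) : psi c = 2^c := if_pos h
lemma psi_of_gt {c : ℤ} (h : 1 < c) : psi c = (c:ℚ) + 1 := if_neg (by omega)
lemma psi_one : psi 1 = 2 := by rw [psi_of_le le_rfl]; norm_num
lemma psi_zero : psi 0 = 1 := by rw [psi_of_le (by norm_num)]; norm_num

lemma psi_le_two_of_le {c : ℤ} (h : c ≤ 1) : psi c ≤ 2 := by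
  rw [psi_of_le h]
  calc (2:ℚ)^c ≤ 2^(1:ℤ) := two_zpow_le h
    _ = 2 := by norm_num

lemma psi_le_one_of_le {c : ℤ} (h : c ≤ 0) : psi c ≤ 1 := by
  rw [psi_of_le (by omega)]
  calc (2:ℚ)^c ≤ 2^(0:ℤ) := two_zpow_le h
    _ = 1 := by norm_num

lemma psi_le_half_of_le {c : ℤ} (h : c ≤ -1) : psi c ≤ 1/2 := by
  rw [psi_of_le (by omega)]
  calc (2:ℚ)^c ≤ 2^(-1:ℤ) := two_zpow_le h
    _ = 1/2 := by norm_num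

lemma psi_neg_two : psi (-2) = 1/4 := by
  rw [psi_of_le (by norm_num)]
  norm_num

-- letter bounds at the potential point
lemma g0_psi (c : ℤ) : fInvFun 0 (psi c) ≤ psi (c-1) := by
  rcases le_or_gt c 1 with h | h
  · have hb2 : (2:ℚ)^c ≤ 2 := by have := psi_le_two_of_le h; rwa [psi_of_le h] at this
    rw [psi_of_le h, fInvFun_mid (le_of_lt (two_zpow_pos c)) (by linarith),
      psi_of_le (by omega)]
    rw [show c - 1 = c + (-1) by ring, zpow_add₀ (by norm_num : (2:ℚ) ≠ 0)]
    apply le_of_eq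
    norm_num
    ring
  · rw [psi_of_gt h]
    have hc : (2:ℚ) ≤ (c:ℚ) + 1 := by
      have : (2:ℚ) ≤ (c:ℚ) := by exact_mod_cast h
      linarith
    rw [fInvFun_hi (by linarith)]
    rcases le_or_gt (c-1) 1 with h2 | h2
    · have hc2 : c = 2 := by omega
      subst hc2
      rw [psi_of_le h2]
      norm_num
    · rw [psi_of_gt h2]
      push_cast
      linarith

lemma g1_psi (c : ℤ) : fInvFun 1 (psi c) ≤ psi c := by
  rcases le_or_gt c 0 with h | h
  · rw [fInvFun_lo (psi_le_one_of_le h)]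
  rcases le_or_gt c 1 with h1 | h1
  · have hc : c = 1 := by omega
    subst hc
    rw [psi_one, fInvFun_mid (by norm_num) (by norm_num)]
    norm_num
  · rw [psi_of_gt h1]
    have hc : (2:ℚ) ≤ (c:ℚ) := by exact_mod_cast h1
    rcases le_or_gt ((c:ℚ)+1) 3 with h2 | h2
    · rw [fInvFun_mid (by linarith) (by linarith)]
      linarith
    · rw [fInvFun_hi (by linarith)]
      linarith

lemma f0_psi (c : ℤ) : fFun 0 (psi c) ≤ psi (c+1) := by
  rcases le_or_gt c 0 with h | h
  · have hb1 : (2:ℚ)^c ≤ 1 := by have := psi_le_one_of_le h; rwa [psi_of_le (by omega)] at this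
    rw [psi_of_le (by omega), psi_of_le (by omega),
      fFun_mid (le_of_lt (two_zpow_pos c)) (by linarith)]
    rw [zpow_add₀ (by norm_num : (2:ℚ) ≠ 0)]
    apply le_of_eq
    norm_num
    ring
  rcases le_or_gt c 1 with h1 | h1
  · have hc : c = 1 := by omega
    subst hc
    rw [psi_one, fFun_hi (by norm_num), psi_of_gt (by norm_num)]
    norm_num
  · rw [psi_of_gt h1, psi_of_gt (by omega)]
    have hc : (2:ℚ) ≤ (c:ℚ) := by exact_mod_cast h1
    rw [fFun_hi (by linarith)]
    push_cast
    linarith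

lemma f1_psi (c : ℤ) : fFun 1 (psi c) ≤ psi (c+1) := by
  rcases le_or_gt c 0 with h | h
  · have hb1 : psi c ≤ 1 := psi_le_one_of_le h
    rw [fFun_lo hb1, psi_of_le (by omega : c ≤ 1), psi_of_le (by omega)]
    exact two_zpow_le (by omega)
  rcases le_or_gt c 1 with h1 | h1
  · have hc : c = 1 := by omega
    subst hc
    rw [psi_one, fFun_mid (by norm_num) (by norm_num), psi_of_gt (by norm_num)]
    norm_num
  · rw [psi_of_gt h1, psi_of_gt (by omega)]
    have hc : (2:ℚ) ≤ (c:ℚ) := by exact_mod_cast h1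
    rw [fFun_hi (by linarith)]
    push_cast
    linarith

-- letters keep values ≤ 1 (for letters x0 = g0, x1 = g1, x1⁻¹ = f1)
lemma g0_le_one {t : ℚ} (h : t ≤ 1) : fInvFun 0 t ≤ 1 := by
  unfold fInvFun; split_ifs <;> linarith
lemma g1_id {t : ℚ} (h : t ≤ 1) : fInvFun 1 t = t := fInvFun_lo h
lemma f1_id {t : ℚ} (h : t ≤ 1) : fFun 1 t = t := fFun_lo h
lemma g1_lt {t : ℚ} (h : 1 < t) : fInvFun 1 t < t := by
  unfold fInvFun; split_ifs <;> linarith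

/-- The symmetrized generating set `{x₀, x₀⁻¹, x₁, x₁⁻¹}`. -/
def gens : Set F := {x 0, (x 0)⁻¹, x 1, (x 1)⁻¹}

/-- The word length `ℓ(g)` with respect to `{x₀, x₁}`: the least `m` such that `g` is a
product of `m` elements of `{x₀, x₀⁻¹, x₁, x₁⁻¹}`. -/
noncomputable def len (g : F) : ℕ :=
  sInf {m | ∃ w : List F, w.length = m ∧ (∀ a ∈ w, a ∈ gens) ∧ w.prod = g}

lemma Phi_x0_apply (t : ℚ) : Phi (x 0) t = fInvFun 0 t := by
  rw [Phi_x]; simp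
lemma Phi_x0_inv_apply (t : ℚ) : Phi ((x 0)⁻¹) t = fFun 0 t := by
  rw [map_inv, Phi_x]; simp
lemma Phi_x1_apply (t : ℚ) : Phi (x 1) t = fInvFun 1 t := by
  rw [Phi_x]; simp
lemma Phi_x1_inv_apply (t : ℚ) : Phi ((x 1)⁻¹) t = fFun 1 t := by
  rw [map_inv, Phi_x]; simp

lemma main_inv : ∀ w : List F, (∀ a ∈ w, a ∈ gens) →
    ∃ p q u v : ℕ,
      w.length = p + q + u + v ∧
      zA w.prod = (p:ℤ) - q ∧
      zB w.prod = ((p:ℤ) + u) - ((q:ℤ) + v) ∧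
      Phi w.prod 2 ≤ psi (1 + ((q:ℤ) + v) - p) ∧
      (q = 0 → Phi w.prod 2 ≤ 1 ∨ (Phi w.prod 2 ≤ psi (1 + (v:ℤ) - p) ∧
        (1 ≤ u → Phi w.prod 2 < psi (1 + (v:ℤ) - p)))) := by
  intro w
  induction w with
  | nil =>
    intro _
    refine ⟨0, 0, 0, 0, rfl, ?_, ?_, ?_, ?_⟩
    · simp [zA]
    · simp [zB]
    · simp only [List.prod_nil, map_one]
      norm_num [psi_one]
    · intro _
      right
      constructor
      · simp only [List.prod_nil, map_one]
        norm_num [psi_one]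
      · intro h; omega
  | cons a w ih =>
    intro hmem
    obtain ⟨p, q, u, v, hlen, hA, hB, hP, hS⟩ := ih (fun b hb => hmem b (List.mem_cons_of_mem a hb))
    have ha := hmem a List.mem_cons_self
    have hva : Phi ((a :: w).prod) 2 = Phi a (Phi w.prod 2) := by
      rw [List.prod_cons, map_mul, Equiv.Perm.mul_apply]
    have hAa : zA ((a :: w).prod) = zA a + zA w.prod := by rw [List.prod_cons, zA_mul]
    have hBa : zB ((a :: w).prod) = zB a + zB w.prod := by rw [List.prod_cons, zB_mul]
    set val := Phi w.prod 2 with hvaldef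
    rcases ha with rfl | rfl | rfl | rfl
    · -- a = x 0   (the permutation g₀ = fInvFun 0), costs: p+1
      refine ⟨p+1, q, u, v, by simp [hlen]; ring, ?_, ?_, ?_, ?_⟩
      · rw [hAa, hA, zA_x0]; push_cast; ring
      · rw [hBa, hB, zB_x]; push_cast; ring
      · rw [hva, Phi_x0_apply]
        calc fInvFun 0 val ≤ fInvFun 0 (psi (1 + ((q:ℤ) + v) - p)) :=
              (fInvFun_strictMono 0).monotone hP
          _ ≤ psi (1 + ((q:ℤ) + v) - p - 1) := g0_psi _
          _ = psi (1 + ((q:ℤ) + v) - (p+1)) := by ring_nf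
      · intro hq
        rcases hS hq with h1 | ⟨h2, h3⟩
        · left
          rw [hva, Phi_x0_apply]
          exact g0_le_one h1
        · right
          constructor
          · rw [hva, Phi_x0_apply]
            calc fInvFun 0 val ≤ fInvFun 0 (psi (1 + (v:ℤ) - p)) :=
                  (fInvFun_strictMono 0).monotone h2
              _ ≤ psi (1 + (v:ℤ) - p - 1) := g0_psi _
              _ = psi (1 + (v:ℤ) - (p+1)) := by ring_nf
          · intro hu
            rw [hva, Phi_x0_apply]
            calc fInvFun 0 val < fInvFun 0 (psi (1 + (v:ℤ) - p)) :=
                  fInvFun_strictMono 0 (h3 hu)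
              _ ≤ psi (1 + (v:ℤ) - p - 1) := g0_psi _
              _ = psi (1 + (v:ℤ) - (p+1)) := by ring_nf
    · -- a = (x 0)⁻¹  (the permutation f₀ = fFun 0), costs: q+1
      refine ⟨p, q+1, u, v, by simp [hlen]; ring, ?_, ?_, ?_, ?_⟩
      · rw [hAa, hA, zA_inv, zA_x0]; push_cast; ring
      · rw [hBa, hB, zB_inv, zB_x]; push_cast; ring
      · rw [hva, Phi_x0_inv_apply]
        calc fFun 0 val ≤ fFun 0 (psi (1 + ((q:ℤ) + v) - p)) :=
              (fFun_strictMono 0).monotone hP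
          _ ≤ psi (1 + ((q:ℤ) + v) - p + 1) := f0_psi _
          _ = psi (1 + (((q:ℤ)+1) + v) - p) := by ring_nf
      · intro hq; omega
    · -- a = x 1  (the permutation g₁ = fInvFun 1), costs: u+1
      refine ⟨p, q, u+1, v, by simp [hlen]; ring, ?_, ?_, ?_, ?_⟩
      · rw [hAa, hA, zA_x1]; push_cast; ring
      · rw [hBa, hB, zB_x]; push_cast; ring
      · rw [hva, Phi_x1_apply]
        calc fInvFun 1 val ≤ fInvFun 1 (psi (1 + ((q:ℤ) + v) - p)) :=
              (fInvFun_strictMono 1).monotone hP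
          _ ≤ psi (1 + ((q:ℤ) + v) - p) := g1_psi _
      · intro hq
        rcases hS hq with h1 | ⟨h2, _⟩
        · left
          rw [hva, Phi_x1_apply, g1_id h1]
          exact h1
        · rcases le_or_gt val 1 with hv1 | hv1
          · left
            rw [hva, Phi_x1_apply, g1_id hv1]
            exact hv1
          · right
            have hlt : Phi ((x 1 :: w).prod) 2 < psi (1 + (v:ℤ) - p) := by
              rw [hva, Phi_x1_apply]
              calc fInvFun 1 val < val := g1_lt hv1
                _ ≤ psi (1 + (v:ℤ) - p) := h2
            exact ⟨le_of_lt hlt, fun _ => hlt⟩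
    · -- a = (x 1)⁻¹  (the permutation f₁ = fFun 1), costs: v+1
      refine ⟨p, q, u, v+1, by simp [hlen]; ring, ?_, ?_, ?_, ?_⟩
      · rw [hAa, hA, zA_inv, zA_x1]; push_cast; ring
      · rw [hBa, hB, zB_inv, zB_x]; push_cast; ring
      · rw [hva, Phi_x1_inv_apply]
        calc fFun 1 val ≤ fFun 1 (psi (1 + ((q:ℤ) + v) - p)) :=
              (fFun_strictMono 1).monotone hP
          _ ≤ psi (1 + ((q:ℤ) + v) - p + 1) := f1_psi _
          _ = psi (1 + ((q:ℤ) + (v+1)) - p) := by ring_nf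
      · intro hq
        rcases hS hq with h1 | ⟨h2, h3⟩
        · left
          rw [hva, Phi_x1_inv_apply, f1_id h1]
          exact h1
        · right
          constructor
          · rw [hva, Phi_x1_inv_apply]
            calc fFun 1 val ≤ fFun 1 (psi (1 + (v:ℤ) - p)) :=
                  (fFun_strictMono 1).monotone h2
              _ ≤ psi (1 + (v:ℤ) - p + 1) := f1_psi _
              _ = psi (1 + ((v:ℤ)+1) - p) := by ring_nf
          · intro hu
            rw [hva, Phi_x1_inv_apply]
            calc fFun 1 val < fFun 1 (psi (1 + (v:ℤ) - p)) :=
                  fFun_strictMono 1 (h3 hu)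
              _ ≤ psi (1 + (v:ℤ) - p + 1) := f1_psi _
              _ = psi (1 + ((v:ℤ)+1) - p) := by ring_nf

/-- `IsPathIn n f g m c` means `c 0 = f, c 1, …, c m = g` is a path of length `m`
from `f` to `g` inside the ball `B_n`: consecutive vertices differ by left
multiplication by a generator, and every vertex has length at most `n`. -/
def IsPathIn (n : ℕ) (f g : F) (m : ℕ) (c : ℕ → F) : Prop :=
  c 0 = f ∧ c m = g ∧ (∀ k < m, c (k + 1) * (c k)⁻¹ ∈ gens) ∧ ∀ k ≤ m, len (c k) ≤ n

/-- The element `l = x₀⁻² x₁ x₀^{n+1} x₁⁻ⁿ`. -/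
def l (n : ℕ) : F := x 0 ^ (-2 : ℤ) * x 1 * x 0 ^ ((n : ℤ) + 1) * x 1 ^ (-(n : ℤ))

/-- The element `r = x₀² l`. -/
def r (n : ℕ) : F := x 0 ^ 2 * l n

lemma rn_eq (n : ℕ) : r n = x 1 * x 0 ^ (n+1) * (x 1 ^ n)⁻¹ := by
  unfold r l
  have h1 : x 0 ^ ((n:ℤ)+1) = x 0 ^ (n+1) := by
    rw [show (n:ℤ)+1 = ((n+1:ℕ):ℤ) by push_cast; ring, zpow_natCast]
  have h2 : x 1 ^ (-(n:ℤ)) = (x 1 ^ n)⁻¹ := by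
    rw [zpow_neg, zpow_natCast]
  rw [h1, h2]
  group

lemma phi_x1_inv_pow (k : ℕ) : Phi ((x 1 ^ k)⁻¹) 2 = 2 + k := by
  induction k with
  | zero => simp
  | succ k ih =>
    have : (x 1 ^ (k+1))⁻¹ = (x 1)⁻¹ * (x 1 ^ k)⁻¹ := by
      rw [pow_succ, mul_inv_rev]
    rw [this, map_mul, Equiv.Perm.mul_apply, ih, Phi_x1_inv_apply,
      fFun_hi (by push_cast; linarith)]
    push_cast
    ring

lemma phi_x0_pow_chain (k : ℕ) : Phi (x 0 ^ (k+1)) ((k:ℚ) + 2) = 1 := by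
  induction k with
  | zero =>
    have h2 : ((0:ℕ):ℚ) + 2 = 2 := by norm_num
    rw [h2, pow_one, Phi_x0_apply, fInvFun_mid (by norm_num) (by norm_num)]
    norm_num
  | succ k ih =>
    have hsplit : x 0 ^ (k+1+1) = x 0 ^ (k+1) * x 0 := by rw [pow_succ]
    rw [hsplit, map_mul, Equiv.Perm.mul_apply, Phi_x0_apply]
    have : fInvFun 0 ((k:ℚ) + 1 + 2) = (k:ℚ) + 2 := by
      rw [fInvFun_hi (by push_cast; linarith)]
      ring
    push_cast
    push_cast at this ih
    rw [this, ih]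

lemma val_r (n : ℕ) : Phi (r n) 2 = 1 := by
  rw [rn_eq, map_mul, map_mul, Equiv.Perm.mul_apply, Equiv.Perm.mul_apply,
    phi_x1_inv_pow]
  have h1 : (2:ℚ) + n = (n:ℚ) + 2 := by ring
  rw [h1, phi_x0_pow_chain, Phi_x1_apply, fInvFun_lo (by norm_num)]

lemma val_t1 (n : ℕ) : Phi (x 0 * r n) 2 = 1/2 := by
  rw [map_mul, Equiv.Perm.mul_apply, val_r, Phi_x0_apply,
    fInvFun_mid (by norm_num) (by norm_num)]
  norm_num

lemma val_t2 (n : ℕ) : Phi ((x 0)⁻¹ * r n) 2 = 2 := by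
  rw [map_mul, Equiv.Perm.mul_apply, val_r, Phi_x0_inv_apply,
    fFun_mid (by norm_num) (by norm_num)]
  norm_num

lemma val_t3 (n : ℕ) : Phi (x 1 * r n) 2 = 1 := by
  rw [map_mul, Equiv.Perm.mul_apply, val_r, Phi_x1_apply,
    fInvFun_lo (by norm_num)]

lemma zA_r (n : ℕ) : zA (r n) = n + 1 := by
  rw [rn_eq, zA_mul, zA_mul, zA_pow, zA_inv, zA_pow, zA_x0, zA_x1]
  push_cast
  ring

lemma zB_r (n : ℕ) : zB (r n) = 2 := by
  rw [rn_eq, zB_mul, zB_mul, zB_pow, zB_inv, zB_pow, zB_x, zB_x]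
  push_cast
  ring

lemma x0_mem : x 0 ∈ gens := by left; rfl
lemma x0_inv_mem : (x 0)⁻¹ ∈ gens := by right; left; rfl
lemma x1_mem : x 1 ∈ gens := by right; right; left; rfl
lemma x1_inv_mem : (x 1)⁻¹ ∈ gens := by right; right; right; rfl

/-- the base word for `r n` with a prefix letter `κ`. -/
def baseWord (n : ℕ) (κ : F) : List F :=
  κ :: x 1 :: (List.replicate (n+1) (x 0) ++ List.replicate n ((x 1)⁻¹))

lemma baseWord_mem (n : ℕ) (κ : F) (hκ : κ ∈ gens) : ∀ a ∈ baseWord n κ, a ∈ gens := by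
  intro a ha
  unfold baseWord at ha
  rcases ha with _ | ⟨_, ha⟩
  · exact hκ
  rcases ha with _ | ⟨_, ha⟩
  · exact x1_mem
  rcases List.mem_append.mp ha with h | h
  · rw [List.eq_of_mem_replicate h]; exact x0_mem
  · rw [List.eq_of_mem_replicate h]; exact x1_inv_mem

lemma baseWord_prod (n : ℕ) (κ : F) : (baseWord n κ).prod = κ * r n := by
  unfold baseWord
  rw [List.prod_cons, List.prod_cons, List.prod_append, List.prod_replicate,
    List.prod_replicate, inv_pow, rn_eq]
  group

lemma baseWord_len (n : ℕ) (κ : F) : (baseWord n κ).length = 2*n + 3 := by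
  simp [baseWord]
  ring

/-- For `n ≥ 1`, the only neighbor of `r` in the Cayley graph lying in `B_{2n+2}`
is `x₁⁻¹ r`. -/
theorem unique_neighbor_in_ball :
    ∀ n : ℕ, 1 ≤ n →
      len ((x 1)⁻¹ * r n) ≤ 2 * n + 2 ∧
      ∀ g ∈ ({x 0 * r n, (x 0)⁻¹ * r n, x 1 * r n, (x 1)⁻¹ * r n} : Set F),
        len g ≤ 2 * n + 2 → g = (x 1)⁻¹ * r n := by
  intro n hn
  constructor
  · -- upper bound via the explicit word x₀^{n+1} x₁^{-n}
    have hup : (2*n+1) ∈ {m | ∃ w : List F, w.length = m ∧ (∀ a ∈ w, a ∈ gens) ∧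
        w.prod = (x 1)⁻¹ * r n} := by
      refine ⟨List.replicate (n+1) (x 0) ++ List.replicate n ((x 1)⁻¹), ?_, ?_, ?_⟩
      · simp
        omega
      · intro a ha
        rcases List.mem_append.mp ha with h | h
        · rw [List.eq_of_mem_replicate h]; exact x0_mem
        · rw [List.eq_of_mem_replicate h]; exact x1_inv_mem
      · rw [List.prod_append, List.prod_replicate, List.prod_replicate, inv_pow, rn_eq]
        group
    exact le_trans (Nat.sInf_le hup) (by omega)
  · intro g hg hlg
    rcases hg with rfl | rfl | rfl | rfl
    · -- g = x 0 * r n : impossible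
      exfalso
      have hne : {m | ∃ w : List F, w.length = m ∧ (∀ a ∈ w, a ∈ gens) ∧
          w.prod = x 0 * r n}.Nonempty :=
        ⟨2*n+3, baseWord n (x 0), baseWord_len _ _, baseWord_mem _ _ x0_mem, baseWord_prod _ _⟩
      obtain ⟨w, hwlen, hwmem, hwprod⟩ := Nat.sInf_mem hne
      have hwle : w.length ≤ 2*n+2 := le_trans (le_of_eq hwlen) hlg
      obtain ⟨p, q, u, v, h1, h2, h3, h4, h5⟩ := main_inv w hwmem
      rw [hwprod] at h2 h3 h4
      rw [zA_mul, zA_x0, zA_r] at h2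
      rw [zB_mul, zB_x, zB_r] at h3
      rw [val_t1] at h4
      have hc : 1 + ((q:ℤ) + v) - p = -2 := by omega
      rw [hc, psi_neg_two] at h4
      norm_num at h4
    · -- g = (x 0)⁻¹ * r n : impossible
      exfalso
      have hne : {m | ∃ w : List F, w.length = m ∧ (∀ a ∈ w, a ∈ gens) ∧
          w.prod = (x 0)⁻¹ * r n}.Nonempty :=
        ⟨2*n+3, baseWord n ((x 0)⁻¹), baseWord_len _ _, baseWord_mem _ _ x0_inv_mem,
          baseWord_prod _ _⟩
      obtain ⟨w, hwlen, hwmem, hwprod⟩ := Nat.sInf_mem hne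
      have hwle : w.length ≤ 2*n+2 := le_trans (le_of_eq hwlen) hlg
      obtain ⟨p, q, u, v, h1, h2, h3, h4, h5⟩ := main_inv w hwmem
      rw [hwprod] at h2 h3 h4 h5
      rw [zA_mul, zA_inv, zA_x0, zA_r] at h2
      rw [zB_mul, zB_inv, zB_x, zB_r] at h3
      rw [val_t2] at h4
      have hcase : (q = 0 ∧ u = 0) ∨ (q = 1 ∧ u = 0) ∨ (q = 0 ∧ u = 1) := by omega
      rcases hcase with ⟨hq, hu⟩ | ⟨hq, hu⟩ | ⟨hq, hu⟩
      · have hc : 1 + ((q:ℤ) + v) - p = 0 := by omega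
        rw [hc, psi_zero] at h4
        norm_num at h4
      · have hc : 1 + ((q:ℤ) + v) - p = 0 := by omega
        rw [hc, psi_zero] at h4
        norm_num at h4
      · rcases h5 hq with h6 | ⟨_, h7⟩
        · rw [val_t2] at h6; norm_num at h6
        · have h8 := h7 (by omega)
          rw [val_t2] at h8
          have hc : 1 + (v:ℤ) - p = 1 := by omega
          rw [hc, psi_one] at h8
          norm_num at h8
    · -- g = x 1 * r n : impossible
      exfalso
      have hne : {m | ∃ w : List F, w.length = m ∧ (∀ a ∈ w, a ∈ gens) ∧
          w.prod = x 1 * r n}.Nonempty :=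
        ⟨2*n+3, baseWord n (x 1), baseWord_len _ _, baseWord_mem _ _ x1_mem, baseWord_prod _ _⟩
      obtain ⟨w, hwlen, hwmem, hwprod⟩ := Nat.sInf_mem hne
      have hwle : w.length ≤ 2*n+2 := le_trans (le_of_eq hwlen) hlg
      obtain ⟨p, q, u, v, h1, h2, h3, h4, h5⟩ := main_inv w hwmem
      rw [hwprod] at h2 h3 h4
      rw [zA_mul, zA_x1, zA_r] at h2
      rw [zB_mul, zB_x, zB_r] at h3
      rw [val_t3] at h4
      have hc : 1 + ((q:ℤ) + v) - p ≤ -1 := by omega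
      have := le_trans h4 (psi_le_half_of_le hc)
      norm_num at this
    · rfl
end ThompsonF
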